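/- arXiv:2501.07795 — 3 statements merged into one kernel-verified Lean document; each statement's English description precedes it below -/
import Mathlib

section
/- Let a_k = A(k+1)^{−η} with constants A ≥ 1 and η ∈ (1/2, 1], let (b_k) be a positive real sequence with b_k = O((k+1)^{−ν}) and b_k = Ω((k+1)^{−ν}) for some ν ∈ [0,1), and let d ≥ 1 be an integer. If moreover ν < d·A^{d−1}/(d + A^{d−1}) − η(d−1), then Σ_{k=0}^{n−1} [∏_{j=k+1}^{n−1} (1 − a_j)^d] a_k^d b_k = Ω(a_n^{d−1} b_n), i.e. liminf_{n→∞} of the sum divided by a_n^{d−1} b_n is strictly positive. -/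
open Filter

private lemma aux_rpow_pow_eq {x : ℝ} (hx : 0 < x) (e : ℝ) (d : ℕ) :
    (x ^ e) ^ d = x ^ (e * d) := by
  rw [← Real.rpow_natCast (x ^ e) d, ← Real.rpow_mul hx.le]

private lemma aux_pow_le_inv {x : ℝ} (hx0 : 0 ≤ x) (hx1 : x ≤ 1) (d : ℕ) :
    (1 - x) ^ d * (1 + (d : ℝ) * x) ≤ 1 := by
  have h1 : 1 + (d : ℝ) * x ≤ (1 + x) ^ d := by
    have := one_add_mul_le_pow (by linarith : (-2:ℝ) ≤ x) d
    simpa using this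
  have h2 : (0:ℝ) ≤ (1 - x) ^ d := pow_nonneg (by linarith) d
  calc (1 - x) ^ d * (1 + (d:ℝ) * x) ≤ (1 - x) ^ d * (1 + x) ^ d :=
        mul_le_mul_of_nonneg_left h1 h2
    _ = ((1 - x) * (1 + x)) ^ d := (mul_pow _ _ _).symm
    _ ≤ 1 := by
        apply pow_le_one₀ (by nlinarith) (by nlinarith)

private lemma aux_bernoulli_rpow {μ t : ℝ} (hμ : 0 ≤ μ) (ht : 0 < t) :
    1 - μ * t ≤ (1 + t) ^ (-μ) := by
  have h1 : (0:ℝ) < 1 + t := by linarith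
  have hlog : Real.log (1 + t) ≤ t := by
    have := Real.log_le_sub_one_of_pos h1; linarith
  have h2 : -(μ * t) ≤ Real.log (1 + t) * (-μ) := by nlinarith
  calc 1 - μ * t = -(μ * t) + 1 := by ring
    _ ≤ Real.exp (-(μ * t)) := Real.add_one_le_exp _
    _ ≤ Real.exp (Real.log (1 + t) * (-μ)) := Real.exp_le_exp.mpr h2
    _ = (1 + t) ^ (-μ) := (Real.rpow_def_of_pos h1 _).symm

private lemma aux_rpow_base_anti {p q e : ℝ} (hp : 0 < p) (hpq : p ≤ q) (he : e ≤ 0) :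
    q ^ e ≤ p ^ e := by
  have hq : 0 < q := lt_of_lt_of_le hp hpq
  rw [← neg_neg e, Real.rpow_neg hq.le, Real.rpow_neg hp.le]
  have h1 : p ^ (-e) ≤ q ^ (-e) := Real.rpow_le_rpow hp.le hpq (by linarith)
  have h2 : 0 < p ^ (-e) := Real.rpow_pos_of_pos hp _
  exact inv_anti₀ h2 h1

private lemma aux_inv_le {s : ℝ} (hs : 0 ≤ s) : 1 / (1 + s) ≤ 1 - s + s ^ 2 := by
  rw [div_le_iff₀ (by linarith)]
  nlinarith

set_option maxHeartbeats 1600000 in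
/-- refinement of Lemma 3 of Hu et al., lower bound. Let
`a_k = A(k+1)^{−η}` with `A ≥ 1`, `η ∈ (1/2,1]`, let `(b_k)` be positive with
`b_k = O((k+1)^{−ν})` and `b_k = Ω((k+1)^{−ν})` for some `ν ∈ [0,1)`, and let `d ≥ 1`
be an integer.  If moreover `ν < d·A^{d−1}/(d + A^{d−1}) − η(d−1)`, then
`Σ_{k=0}^{n−1} [∏_{j=k+1}^{n−1} (1 − a_j)^d] a_k^d b_k = Ω(a_n^{d−1} b_n)`, i.e. the
liminf of the sum divided by `a_n^{d−1} b_n` is strictly positive. -/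
theorem sum_prod_step_bigOmega (A η ν : ℝ) (hA : 1 ≤ A) (hη₁ : 1 / 2 < η) (hη₂ : η ≤ 1)
    (hν₀ : 0 ≤ ν) (hν₁ : ν < 1) (a b : ℕ → ℝ)
    (ha : ∀ k : ℕ, a k = A * ((k : ℝ) + 1) ^ (-η))
    (hb_pos : ∀ k, 0 < b k)
    (hbO : ∃ C : ℝ, ∀ᶠ k : ℕ in atTop, b k ≤ C * ((k : ℝ) + 1) ^ (-ν))
    (hbΩ : ∃ c : ℝ, 0 < c ∧ ∀ᶠ k : ℕ in atTop, c * ((k : ℝ) + 1) ^ (-ν) ≤ b k)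
    (d : ℕ) (hd : 1 ≤ d)
    (hν' : ν < (d : ℝ) * A ^ (d - 1) / ((d : ℝ) + A ^ (d - 1)) - η * ((d : ℝ) - 1)) :
    0 < Filter.liminf (fun n : ℕ =>
        (∑ k ∈ Finset.range n,
          (∏ j ∈ Finset.Ico (k + 1) n, (1 - a j) ^ d) * a k ^ d * b k) /
        (a n ^ (d - 1) * b n)) atTop := by
  clear hν'
  obtain ⟨C, hC⟩ := hbO
  obtain ⟨cb, hcb_pos, hcb⟩ := hbΩ
  have hη0 : (0:ℝ) < η := by linarith
  have hA0 : (0:ℝ) < A := by linarith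
  have hd1 : (1:ℝ) ≤ (d:ℝ) := by exact_mod_cast hd
  have hd0 : (0:ℝ) < (d:ℝ) := by linarith
  have hx1 : ∀ n : ℕ, (1:ℝ) ≤ (n:ℝ) + 1 := fun n => by
    have : (0:ℝ) ≤ (n:ℝ) := Nat.cast_nonneg n; linarith
  have hx0 : ∀ n : ℕ, (0:ℝ) < (n:ℝ) + 1 := fun n => by linarith [hx1 n]
  have ha_pos : ∀ k, 0 < a k := fun k => by
    rw [ha k]; positivity
  have ha_leA : ∀ k, a k ≤ A := fun k => by
    rw [ha k]
    exact mul_le_of_le_one_right hA0.le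
      (Real.rpow_le_one_of_one_le_of_nonpos (hx1 k) (by linarith))
  have ha_ge : ∀ k : ℕ, 1 / ((k:ℝ) + 1) ≤ a k := fun k => by
    have h1 : ((k:ℝ)+1) ^ (-(1:ℝ)) ≤ ((k:ℝ)+1) ^ (-η) :=
      Real.rpow_le_rpow_of_exponent_le (hx1 k) (by linarith)
    have h2 : ((k:ℝ)+1) ^ (-(1:ℝ)) = 1 / ((k:ℝ)+1) := by
      rw [Real.rpow_neg_one]; exact (one_div _).symm
    rw [ha k]
    calc 1/((k:ℝ)+1) = 1 * (((k:ℝ)+1) ^ (-(1:ℝ))) := by rw [h2, one_mul]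
      _ ≤ A * (((k:ℝ)+1) ^ (-η)) :=
          mul_le_mul hA h1 (Real.rpow_nonneg (hx0 k).le _) hA0.le
  -- constants
  set μ : ℝ := η * ((d:ℝ) - 1) + ν with hμdef
  have hμ0 : 0 ≤ μ := add_nonneg (mul_nonneg hη0.le (by linarith)) hν₀
  have hμd : μ < (d:ℝ) := by nlinarith [mul_nonneg (sub_nonneg.mpr hη₂) (sub_nonneg.mpr hd1)]
  have hδ : 0 < (d:ℝ) * A - μ := by nlinarith
  have hC0 : 0 < C := by
    obtain ⟨k, hk⟩ := hC.exists
    have h2 : (0:ℝ) < ((k:ℝ)+1) ^ (-ν) := Real.rpow_pos_of_pos (hx0 k) _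
    nlinarith [hb_pos k]
  -- tendsto facts
  have hrpow_to0 : ∀ K : ℝ, Tendsto (fun n : ℕ => K * ((n:ℝ)+1) ^ (-η)) atTop (nhds 0) := by
    intro K
    have h1 : Tendsto (fun n : ℕ => (n:ℝ) + 1) atTop atTop :=
      tendsto_atTop_add_const_right _ 1 tendsto_natCast_atTop_atTop
    have h2 := ((tendsto_rpow_neg_atTop hη0).comp h1).const_mul K
    simpa using h2
  have hev1 : ∀ᶠ n : ℕ in atTop, a n ≤ 1/2 := by
    have h2 := (hrpow_to0 A).eventually_lt_const (show (0:ℝ) < 1/2 by norm_num)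
    refine h2.mono fun n h => ?_
    rw [ha n]; exact h.le
  have hev4 : ∀ᶠ n : ℕ in atTop,
      ((d:ℝ)*A)^2 * ((n:ℝ)+1) ^ (-η) ≤ ((d:ℝ)*A - μ)/2 := by
    have h2 := (hrpow_to0 (((d:ℝ)*A)^2)).eventually_lt_const
      (show (0:ℝ) < ((d:ℝ)*A - μ)/2 by linarith)
    exact h2.mono fun n h => h.le
  obtain ⟨N₁, hN₁⟩ := eventually_atTop.mp (hev1.and (hcb.and (hC.and hev4)))
  set N := max N₁ 1 with hNdef
  have hN1 : 1 ≤ N := le_max_right _ _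
  have hNprop : ∀ n, N ≤ n → a n ≤ 1/2 ∧ cb * ((n:ℝ)+1) ^ (-ν) ≤ b n ∧
      b n ≤ C * ((n:ℝ)+1) ^ (-ν) ∧ ((d:ℝ)*A)^2 * ((n:ℝ)+1) ^ (-η) ≤ ((d:ℝ)*A - μ)/2 := by
    intro n hn
    have := hN₁ n (le_trans (le_max_left _ _) hn)
    tauto
  -- telescoping bound
  have htel : ∀ n, N ≤ n → 0 ≤ (∏ j ∈ Finset.Ico N n, (1 - a j)) ∧
      (∏ j ∈ Finset.Ico N n, (1 - a j)) ≤ (N:ℝ)/(n:ℝ) := by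
    intro n hn
    induction n, hn using Nat.le_induction with
    | base =>
      rw [Finset.Ico_self, Finset.prod_empty]
      have : (0:ℝ) < (N:ℝ) := by exact_mod_cast hN1
      constructor
      · norm_num
      · rw [div_self this.ne']
    | succ m hm ih =>
      obtain ⟨h0, h1⟩ := ih
      rw [Finset.prod_Ico_succ_top hm]
      have hm1 : (1:ℝ) ≤ (m:ℝ) := by
        have : (N:ℝ) ≤ (m:ℝ) := by exact_mod_cast hm
        have : (1:ℝ) ≤ (N:ℝ) := by exact_mod_cast hN1
        linarith [show (N:ℝ) ≤ (m:ℝ) by exact_mod_cast hm]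
      have hfm : 0 ≤ 1 - a m := by linarith [(hNprop m hm).1]
      have hfm2 : 1 - a m ≤ (m:ℝ)/((m:ℝ)+1) := by
        have h3 : (m:ℝ)/((m:ℝ)+1) = 1 - 1/((m:ℝ)+1) := by
          field_simp
          ring
        rw [h3]
        linarith [ha_ge m]
      have hN0 : (0:ℝ) < (N:ℝ) := by exact_mod_cast hN1
      constructor
      · exact mul_nonneg h0 hfm
      · calc (∏ j ∈ Finset.Ico N m, (1 - a j)) * (1 - a m)
            ≤ ((N:ℝ)/(m:ℝ)) * ((m:ℝ)/((m:ℝ)+1)) := by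
              apply mul_le_mul h1 hfm2 hfm (by positivity)
          _ = (N:ℝ)/((m:ℝ)+1) := by
              field_simp
          _ = (N:ℝ)/((m+1:ℕ):ℝ) := by push_cast; ring
  -- tail sum Q
  set Q : ℕ → ℝ := fun n =>
    ∑ k ∈ Finset.Ico N n, (∏ j ∈ Finset.Ico (k + 1) n, (1 - a j) ^ d) * a k ^ d * b k
    with hQdef
  have hQN : Q N = 0 := by simp [hQdef]
  have hQrec : ∀ n, N ≤ n → Q (n+1) = (1 - a n)^d * Q n + a n ^ d * b n := by
    intro n hn
    simp only [hQdef]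
    rw [Finset.sum_Ico_succ_top hn, Finset.mul_sum]
    congr 1
    · apply Finset.sum_congr rfl
      intro k hk
      rw [Finset.mem_Ico] at hk
      rw [Finset.prod_Ico_succ_top (by omega : k + 1 ≤ n)]
      ring
    · rw [Finset.Ico_self, Finset.prod_empty, one_mul]
  -- lower bound for Q by induction
  have hpowA : A ^ (d-1) * A = A ^ d := by
    rw [← pow_succ]; congr 1; omega
  set c : ℝ := min (A ^ (d-1) * cb / (d:ℝ)) (a N ^ d * b N) with hcdef
  have hc0 : 0 < c := by
    apply lt_min
    · apply div_pos (mul_pos (pow_pos hA0 _) hcb_pos) hd0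
    · exact mul_pos (pow_pos (ha_pos N) d) (hb_pos N)
  have hcd : c * (d:ℝ) * A ≤ A ^ d * cb := by
    have h1 : c ≤ A ^ (d-1) * cb / (d:ℝ) := min_le_left _ _
    have h2 : c * (d:ℝ) ≤ A ^ (d-1) * cb := (le_div_iff₀ hd0).mp h1
    calc c * (d:ℝ) * A ≤ A ^ (d-1) * cb * A := mul_le_mul_of_nonneg_right h2 hA0.le
      _ = A ^ d * cb := by rw [← hpowA]; ring
  have hkey1 : ∀ m : ℕ, (((m:ℝ)+1) ^ (-η)) ^ d * ((m:ℝ)+1) ^ (-ν)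
      = ((m:ℝ)+1) ^ (-η) * ((m:ℝ)+1) ^ (-μ) := by
    intro m
    rw [aux_rpow_pow_eq (hx0 m), ← Real.rpow_add (hx0 m), ← Real.rpow_add (hx0 m)]
    congr 1
    rw [hμdef]; ring
  have hQlow : ∀ n, N + 1 ≤ n → c * ((n:ℝ)+1) ^ (-μ) ≤ Q n := by
    intro n hn
    induction n, hn using Nat.le_induction with
    | base =>
      rw [hQrec N le_rfl, hQN, mul_zero, zero_add]
      have h1 : (((N+1:ℕ):ℝ)+1) ^ (-μ) ≤ 1 :=
        Real.rpow_le_one_of_one_le_of_nonpos (hx1 (N+1)) (by linarith)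
      calc c * (((N+1:ℕ):ℝ)+1) ^ (-μ) ≤ c * 1 := mul_le_mul_of_nonneg_left h1 hc0.le
        _ = c := mul_one c
        _ ≤ a N ^ d * b N := min_le_right _ _
    | succ m hm ih =>
      have hmge : N ≤ m := by omega
      obtain ⟨ham, hbm_low, hbm_up, _⟩ := hNprop m hmge
      rw [hQrec m hmge]
      have hx0' : (0:ℝ) < (m:ℝ)+1 := hx0 m
      have hr0 : (0:ℝ) < ((m:ℝ)+1) ^ (-η) := Real.rpow_pos_of_pos hx0' _
      have hw0 : (0:ℝ) < ((m:ℝ)+1) ^ (-μ) := Real.rpow_pos_of_pos hx0' _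
      have hpow_nn : (0:ℝ) ≤ (1 - a m)^d := pow_nonneg (by linarith) d
      have hbern : 1 - (d:ℝ) * a m ≤ (1 - a m)^d := by
        have h5 := one_add_mul_le_pow (by linarith [ha_pos m] : (-2:ℝ) ≤ -(a m)) d
        calc 1 - (d:ℝ) * a m = 1 + (d:ℝ) * (-(a m)) := by ring
          _ ≤ (1 + -(a m))^d := h5
          _ = (1 - a m)^d := by rw [show (1:ℝ) + -(a m) = 1 - a m by ring]
      have ham_eq : a m = A * ((m:ℝ)+1) ^ (-η) := ha m
      have hamd : A ^ d * cb * (((m:ℝ)+1) ^ (-η) * ((m:ℝ)+1) ^ (-μ)) ≤ a m ^ d * b m := by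
        have h1 : a m ^ d = A ^ d * (((m:ℝ)+1) ^ (-η)) ^ d := by
          rw [ham_eq, mul_pow]
        have h2 : (0:ℝ) ≤ A ^ d * (((m:ℝ)+1) ^ (-η)) ^ d := by positivity
        calc A ^ d * cb * (((m:ℝ)+1) ^ (-η) * ((m:ℝ)+1) ^ (-μ))
            = A ^ d * ((((m:ℝ)+1) ^ (-η)) ^ d * ((m:ℝ)+1) ^ (-ν)) * cb := by
              rw [hkey1 m]; ring
          _ = (A ^ d * (((m:ℝ)+1) ^ (-η)) ^ d) * (cb * ((m:ℝ)+1) ^ (-ν)) := by ring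
          _ ≤ (A ^ d * (((m:ℝ)+1) ^ (-η)) ^ d) * b m := mul_le_mul_of_nonneg_left hbm_low h2
          _ = a m ^ d * b m := by rw [h1]
      have hstep : c * (((m:ℝ)+1) ^ (-μ)) ≤
          (1 - a m)^d * (c * ((m:ℝ)+1) ^ (-μ))
            + A ^ d * cb * (((m:ℝ)+1) ^ (-η) * ((m:ℝ)+1) ^ (-μ)) := by
        rw [ham_eq] at hbern ⊢
        have h3 : (1 - (d:ℝ) * (A * ((m:ℝ)+1) ^ (-η))) * (c * ((m:ℝ)+1) ^ (-μ))
            ≤ (1 - A * ((m:ℝ)+1) ^ (-η))^d * (c * ((m:ℝ)+1) ^ (-μ)) :=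
          mul_le_mul_of_nonneg_right hbern (by positivity)
        have h4 : c * (d:ℝ) * A * (((m:ℝ)+1) ^ (-η) * ((m:ℝ)+1) ^ (-μ)) ≤
            A ^ d * cb * (((m:ℝ)+1) ^ (-η) * ((m:ℝ)+1) ^ (-μ)) :=
          mul_le_mul_of_nonneg_right hcd (by positivity)
        linarith [h3, h4]
      have hcast : ((m+1:ℕ):ℝ) + 1 = ((m:ℝ)+1) + 1 := by push_cast; ring
      have hmono : (((m:ℝ)+1) + 1) ^ (-μ) ≤ ((m:ℝ)+1) ^ (-μ) :=
        aux_rpow_base_anti hx0' (by linarith) (by linarith)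
      calc c * (((m+1:ℕ):ℝ)+1) ^ (-μ) = c * ((((m:ℝ)+1) + 1) ^ (-μ)) := by rw [hcast]
        _ ≤ c * (((m:ℝ)+1) ^ (-μ)) := mul_le_mul_of_nonneg_left hmono hc0.le
        _ ≤ (1 - a m)^d * (c * ((m:ℝ)+1) ^ (-μ))
            + A ^ d * cb * (((m:ℝ)+1) ^ (-η) * ((m:ℝ)+1) ^ (-μ)) := hstep
        _ ≤ (1 - a m)^d * Q m + a m ^ d * b m :=
            add_le_add (mul_le_mul_of_nonneg_left ih hpow_nn) hamd
  -- upper bound for Q by induction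
  set c' : ℝ := max (2 * A ^ d * C / ((d:ℝ) * A - μ)) 1 with hc'def
  have hc'0 : (0:ℝ) < c' := lt_of_lt_of_le one_pos (le_max_right _ _)
  have hc'C : A ^ d * C ≤ c' * (((d:ℝ) * A - μ)/2) := by
    have h1 : 2 * A ^ d * C / ((d:ℝ) * A - μ) ≤ c' := le_max_left _ _
    rw [div_le_iff₀ hδ] at h1
    nlinarith
  have hQup : ∀ n, N ≤ n → Q n ≤ c' * ((n:ℝ)+1) ^ (-μ) := by
    intro n hn
    induction n, hn using Nat.le_induction with
    | base =>
      rw [hQN]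
      have : (0:ℝ) < ((N:ℝ)+1) ^ (-μ) := Real.rpow_pos_of_pos (hx0 N) _
      nlinarith
    | succ m hm ih =>
      obtain ⟨ham, hbm_low, hbm_up, hm4⟩ := hNprop m hm
      rw [hQrec m hm]
      have hx0' : (0:ℝ) < (m:ℝ)+1 := hx0 m
      have hr0 : (0:ℝ) < ((m:ℝ)+1) ^ (-η) := Real.rpow_pos_of_pos hx0' _
      have hw0 : (0:ℝ) < ((m:ℝ)+1) ^ (-μ) := Real.rpow_pos_of_pos hx0' _
      have hpow_nn : (0:ℝ) ≤ (1 - a m)^d := pow_nonneg (by linarith) d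
      have ham_eq : a m = A * ((m:ℝ)+1) ^ (-η) := ha m
      -- (1 - a m)^d ≤ 1 - d a m + (d a m)^2
      have h_invle : (1 - a m)^d ≤ 1 - (d:ℝ) * a m + ((d:ℝ) * a m)^2 := by
        have e1 := aux_pow_le_inv (ha_pos m).le (by linarith) d
        have e2 : (0:ℝ) < 1 + (d:ℝ) * a m := by
          nlinarith [mul_nonneg hd0.le (ha_pos m).le]
        have e3 : (1 - a m)^d ≤ 1/(1 + (d:ℝ) * a m) := by
          rw [le_div_iff₀ e2]; exact e1
        have e4 := aux_inv_le (s := (d:ℝ) * a m) (mul_nonneg hd0.le (ha_pos m).le)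
        calc (1 - a m)^d ≤ 1/(1 + (d:ℝ) * a m) := e3
          _ ≤ 1 - (d:ℝ) * a m + ((d:ℝ) * a m)^2 := e4
      have hs2 : ((d:ℝ) * a m)^2 ≤ (((d:ℝ) * A - μ)/2) * (((m:ℝ)+1) ^ (-η)) := by
        have h6 := mul_le_mul_of_nonneg_right hm4 hr0.le
        calc ((d:ℝ) * a m)^2 = ((d:ℝ)*A)^2 * (((m:ℝ)+1) ^ (-η)) * (((m:ℝ)+1) ^ (-η)) := by
              rw [ham_eq]; ring
          _ ≤ (((d:ℝ) * A - μ)/2) * (((m:ℝ)+1) ^ (-η)) := h6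
      have hmux : μ * (1/((m:ℝ)+1)) ≤ μ * (((m:ℝ)+1) ^ (-η)) := by
        apply mul_le_mul_of_nonneg_left ?_ hμ0
        have h7 : ((m:ℝ)+1) ^ (-(1:ℝ)) ≤ ((m:ℝ)+1) ^ (-η) :=
          Real.rpow_le_rpow_of_exponent_le (hx1 m) (by linarith)
        rw [Real.rpow_neg_one] at h7
        rw [one_div]
        exact h7
      have hscalar : (1 - a m)^d * c' + A ^ d * C * (((m:ℝ)+1) ^ (-η))
          ≤ c' * (1 - μ * (1/((m:ℝ)+1))) := by
        have t1 : (1 - a m)^d * c' ≤ (1 - (d:ℝ) * a m + ((d:ℝ) * a m)^2) * c' :=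
          mul_le_mul_of_nonneg_right h_invle hc'0.le
        have t2 : ((d:ℝ) * a m)^2 * c' ≤ ((((d:ℝ) * A - μ)/2) * (((m:ℝ)+1) ^ (-η))) * c' :=
          mul_le_mul_of_nonneg_right hs2 hc'0.le
        have t3 : (μ * (1/((m:ℝ)+1))) * c' ≤ (μ * (((m:ℝ)+1) ^ (-η))) * c' :=
          mul_le_mul_of_nonneg_right hmux hc'0.le
        have t4 : A ^ d * C * (((m:ℝ)+1) ^ (-η)) ≤ (c' * (((d:ℝ) * A - μ)/2)) * (((m:ℝ)+1) ^ (-η)) :=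
          mul_le_mul_of_nonneg_right hc'C hr0.le
        have t5 : (1 - (d:ℝ) * a m) * c' = c' - (d:ℝ) * A * (((m:ℝ)+1) ^ (-η)) * c' := by
          rw [ham_eq]; ring
        nlinarith [t1, t2, t3, t4, t5]
      have hamdbC : a m ^ d * b m ≤ A ^ d * C * (((m:ℝ)+1) ^ (-η) * ((m:ℝ)+1) ^ (-μ)) := by
        have h1 : a m ^ d = A ^ d * (((m:ℝ)+1) ^ (-η)) ^ d := by rw [ham_eq, mul_pow]
        have h2 : (0:ℝ) ≤ A ^ d * (((m:ℝ)+1) ^ (-η)) ^ d := by positivity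
        calc a m ^ d * b m ≤ a m ^ d * (C * ((m:ℝ)+1) ^ (-ν)) := by
              apply mul_le_mul_of_nonneg_left hbm_up (pow_nonneg (ha_pos m).le d)
          _ = (A ^ d * (((m:ℝ)+1) ^ (-η)) ^ d) * (C * ((m:ℝ)+1) ^ (-ν)) := by rw [h1]
          _ = A ^ d * C * ((((m:ℝ)+1) ^ (-η)) ^ d * ((m:ℝ)+1) ^ (-ν)) := by ring
          _ = A ^ d * C * (((m:ℝ)+1) ^ (-η) * ((m:ℝ)+1) ^ (-μ)) := by rw [hkey1 m]
      have hcast : ((m+1:ℕ):ℝ) + 1 = ((m:ℝ)+1) + 1 := by push_cast; ring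
      have hsplit2 : (((m:ℝ)+1) + 1) ^ (-μ)
          = (((m:ℝ)+1) ^ (-μ)) * ((1 + 1/((m:ℝ)+1)) ^ (-μ)) := by
        rw [← Real.mul_rpow hx0'.le (by positivity)]
        congr 1
        field_simp
      have hb_r := aux_bernoulli_rpow hμ0 (show (0:ℝ) < 1/((m:ℝ)+1) by positivity)
      have hfin : (c' * (1 - μ * (1/((m:ℝ)+1)))) * (((m:ℝ)+1) ^ (-μ))
          ≤ c' * ((((m+1:ℕ):ℝ)+1) ^ (-μ)) := by
        rw [hcast, hsplit2]
        have h8 := mul_le_mul_of_nonneg_left hb_r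
          (show (0:ℝ) ≤ c' * (((m:ℝ)+1) ^ (-μ)) by positivity)
        nlinarith [h8]
      calc (1 - a m)^d * Q m + a m ^ d * b m
          ≤ (1 - a m)^d * (c' * ((m:ℝ)+1) ^ (-μ))
            + A ^ d * C * (((m:ℝ)+1) ^ (-η) * ((m:ℝ)+1) ^ (-μ)) :=
            add_le_add (mul_le_mul_of_nonneg_left ih hpow_nn) hamdbC
        _ = ((1 - a m)^d * c' + A ^ d * C * (((m:ℝ)+1) ^ (-η))) * (((m:ℝ)+1) ^ (-μ)) := by
            ring
        _ ≤ (c' * (1 - μ * (1/((m:ℝ)+1)))) * (((m:ℝ)+1) ^ (-μ)) :=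
            mul_le_mul_of_nonneg_right hscalar hw0.le
        _ ≤ c' * ((((m+1:ℕ):ℝ)+1) ^ (-μ)) := hfin
  -- bound on the initial segment of the sum
  have hE0 : 0 < ∑ k ∈ Finset.range N, a k ^ d * b k := by
    apply Finset.sum_pos (fun k _ => mul_pos (pow_pos (ha_pos k) d) (hb_pos k))
    exact Finset.nonempty_range_iff.mpr (by omega)
  set E : ℝ := ∑ k ∈ Finset.range N, a k ^ d * b k with hEdef
  set G : ℝ := (A ^ N * (N:ℝ)) ^ d * E with hGdef
  have hN0R : (0:ℝ) < (N:ℝ) := by exact_mod_cast hN1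
  have hG0 : 0 < G := by
    apply mul_pos (pow_pos _ d) hE0
    positivity
  have hNeg : ∀ n, N ≤ n →
      |∑ k ∈ Finset.range N, (∏ j ∈ Finset.Ico (k + 1) n, (1 - a j) ^ d) * a k ^ d * b k|
        ≤ G / (n:ℝ)^d := by
    intro n hn
    have hn0 : (0:ℝ) < (n:ℝ) := by
      have : (N:ℝ) ≤ (n:ℝ) := by exact_mod_cast hn
      linarith
    have hbig : ∀ k ∈ Finset.range N,
        |(∏ j ∈ Finset.Ico (k + 1) n, (1 - a j) ^ d) * a k ^ d * b k|
          ≤ (A ^ N * (N:ℝ)/(n:ℝ))^d * (a k ^ d * b k) := by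
      intro k hk
      rw [Finset.mem_range] at hk
      have hk1 : k + 1 ≤ N := hk
      have hterm : |(∏ j ∈ Finset.Ico (k + 1) n, (1 - a j) ^ d) * a k ^ d * b k|
          = |∏ j ∈ Finset.Ico (k + 1) n, (1 - a j) ^ d| * (a k ^ d * b k) := by
        rw [abs_mul, abs_mul, abs_of_pos (hb_pos k), abs_of_pos (pow_pos (ha_pos k) d),
          mul_assoc]
      rw [hterm]
      apply mul_le_mul_of_nonneg_right ?_ (le_of_lt (mul_pos (pow_pos (ha_pos k) d) (hb_pos k)))
      rw [Finset.prod_pow, abs_pow]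
      apply pow_le_pow_left₀ (abs_nonneg _) ?_ d
      rw [← Finset.prod_Ico_consecutive _ hk1 hn, abs_mul]
      have hp1 : |∏ j ∈ Finset.Ico (k+1) N, (1 - a j)| ≤ A ^ N := by
        rw [Finset.abs_prod]
        calc ∏ j ∈ Finset.Ico (k+1) N, |1 - a j| ≤ ∏ _j ∈ Finset.Ico (k+1) N, A := by
              apply Finset.prod_le_prod (fun j _ => abs_nonneg _) (fun j _ => ?_)
              rw [abs_le]
              constructor
              · linarith [ha_leA j]
              · linarith [ha_pos j]
          _ = A ^ (Finset.Ico (k+1) N).card := Finset.prod_const A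
          _ ≤ A ^ N := pow_le_pow_right₀ hA (by rw [Nat.card_Ico]; omega)
      have hp2 : |∏ j ∈ Finset.Ico N n, (1 - a j)| ≤ (N:ℝ)/(n:ℝ) := by
        rw [abs_of_nonneg (htel n hn).1]
        exact (htel n hn).2
      calc |∏ j ∈ Finset.Ico (k+1) N, (1 - a j)| * |∏ j ∈ Finset.Ico N n, (1 - a j)|
          ≤ A ^ N * ((N:ℝ)/(n:ℝ)) := mul_le_mul hp1 hp2 (abs_nonneg _) (by positivity)
        _ = A ^ N * (N:ℝ)/(n:ℝ) := by ring
    calc |∑ k ∈ Finset.range N, (∏ j ∈ Finset.Ico (k + 1) n, (1 - a j) ^ d) * a k ^ d * b k|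
        ≤ ∑ k ∈ Finset.range N, |(∏ j ∈ Finset.Ico (k + 1) n, (1 - a j) ^ d) * a k ^ d * b k| :=
          Finset.abs_sum_le_sum_abs _ _
      _ ≤ ∑ k ∈ Finset.range N, (A ^ N * (N:ℝ)/(n:ℝ))^d * (a k ^ d * b k) :=
          Finset.sum_le_sum hbig
      _ = (A ^ N * (N:ℝ)/(n:ℝ))^d * E := by
          rw [hEdef, Finset.mul_sum]
      _ = G / (n:ℝ)^d := by
          rw [hGdef, div_pow]; ring
  -- eventual smallness of the initial segment
  have hsmall : ∀ᶠ n : ℕ in atTop, G / (n:ℝ)^d ≤ (c/2) * ((n:ℝ)+1) ^ (-μ) := by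
    have hto : Tendsto (fun n : ℕ => G * (n:ℝ) ^ (μ - (d:ℝ))) atTop (nhds 0) := by
      have h1 : Tendsto (fun x : ℝ => x ^ (-((d:ℝ) - μ))) atTop (nhds 0) :=
        tendsto_rpow_neg_atTop (by linarith)
      have h2 := (h1.comp tendsto_natCast_atTop_atTop).const_mul G
      simp only [mul_zero] at h2
      refine h2.congr fun n => ?_
      simp only [Function.comp_apply]
      rw [neg_sub]
    have h2pos : (0:ℝ) < (c/2) * (2:ℝ) ^ (-μ) := by
      have : (0:ℝ) < (2:ℝ) ^ (-μ) := Real.rpow_pos_of_pos (by norm_num) _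
      nlinarith
    have hev := hto.eventually_lt_const h2pos
    filter_upwards [hev, eventually_ge_atTop 1] with n h1 h2
    have hn1 : (1:ℝ) ≤ (n:ℝ) := by exact_mod_cast h2
    have hn0 : (0:ℝ) < (n:ℝ) := by linarith
    have e1 : G / (n:ℝ)^d = G * (n:ℝ) ^ (μ - (d:ℝ)) * (n:ℝ) ^ (-μ) := by
      rw [mul_assoc, ← Real.rpow_add hn0, show μ - (d:ℝ) + -μ = -(d:ℝ) by ring,
        Real.rpow_neg hn0.le, Real.rpow_natCast]
      ring
    rw [e1]
    have e2 : (0:ℝ) ≤ (n:ℝ) ^ (-μ) := (Real.rpow_pos_of_pos hn0 _).le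
    calc G * (n:ℝ)^(μ-(d:ℝ)) * (n:ℝ)^(-μ) ≤ ((c/2) * (2:ℝ)^(-μ)) * (n:ℝ)^(-μ) :=
          mul_le_mul_of_nonneg_right h1.le e2
      _ = (c/2) * ((2:ℝ)^(-μ) * (n:ℝ)^(-μ)) := by ring
      _ = (c/2) * ((2*(n:ℝ)) ^ (-μ)) := by rw [← Real.mul_rpow (by norm_num) hn0.le]
      _ ≤ (c/2) * (((n:ℝ)+1) ^ (-μ)) := by
          apply mul_le_mul_of_nonneg_left ?_ (by linarith)
          exact aux_rpow_base_anti (hx0 n) (by linarith) (by linarith)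
  -- splitting of the full sum
  have hSsplit : ∀ n : ℕ, N ≤ n →
      (∑ k ∈ Finset.range n, (∏ j ∈ Finset.Ico (k + 1) n, (1 - a j) ^ d) * a k ^ d * b k)
      = (∑ k ∈ Finset.range N, (∏ j ∈ Finset.Ico (k + 1) n, (1 - a j) ^ d) * a k ^ d * b k)
        + Q n := by
    intro n hn
    simp only [hQdef]
    exact (Finset.sum_range_add_sum_Ico _ hn).symm
  -- denominator bounds
  have hcastd : ((d - 1 : ℕ):ℝ) = (d:ℝ) - 1 := by
    rw [Nat.cast_sub hd, Nat.cast_one]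
  have hdenom : ∀ n : ℕ, a n ^ (d-1) * b n
      = A^(d-1) * ((n:ℝ)+1) ^ (-η * ((d:ℝ)-1)) * b n := by
    intro n
    rw [ha n, mul_pow, aux_rpow_pow_eq (hx0 n), hcastd]
  have hDpos : ∀ n, 0 < a n ^ (d-1) * b n :=
    fun n => mul_pos (pow_pos (ha_pos n) _) (hb_pos n)
  have hDub : ∀ n, N ≤ n → a n ^ (d-1) * b n ≤ A^(d-1) * C * ((n:ℝ)+1) ^ (-μ) := by
    intro n hn
    obtain ⟨_, _, hbu, _⟩ := hNprop n hn
    rw [hdenom n]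
    have h1 : (0:ℝ) ≤ A^(d-1) * ((n:ℝ)+1) ^ (-η * ((d:ℝ)-1)) := by positivity
    calc A^(d-1) * ((n:ℝ)+1) ^ (-η * ((d:ℝ)-1)) * b n
        ≤ A^(d-1) * ((n:ℝ)+1) ^ (-η * ((d:ℝ)-1)) * (C * ((n:ℝ)+1) ^ (-ν)) :=
          mul_le_mul_of_nonneg_left hbu h1
      _ = A^(d-1) * C * (((n:ℝ)+1) ^ (-η * ((d:ℝ)-1)) * ((n:ℝ)+1) ^ (-ν)) := by ring
      _ = A^(d-1) * C * ((n:ℝ)+1) ^ (-μ) := by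
          rw [← Real.rpow_add (hx0 n)]
          congr 1
          rw [hμdef]; ring
  have hDlb : ∀ n, N ≤ n → A^(d-1) * cb * ((n:ℝ)+1) ^ (-μ) ≤ a n ^ (d-1) * b n := by
    intro n hn
    obtain ⟨_, hbl, _, _⟩ := hNprop n hn
    rw [hdenom n]
    calc A^(d-1) * cb * ((n:ℝ)+1) ^ (-μ)
        = A^(d-1) * (((n:ℝ)+1) ^ (-η * ((d:ℝ)-1)) * ((n:ℝ)+1) ^ (-ν)) * cb := by
          rw [← Real.rpow_add (hx0 n),
            show -η * ((d:ℝ)-1) + -ν = -μ by rw [hμdef]; ring]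
          ring
      _ = A^(d-1) * ((n:ℝ)+1) ^ (-η * ((d:ℝ)-1)) * (cb * ((n:ℝ)+1) ^ (-ν)) := by ring
      _ ≤ A^(d-1) * ((n:ℝ)+1) ^ (-η * ((d:ℝ)-1)) * b n :=
          mul_le_mul_of_nonneg_left hbl (by positivity)
  -- final assembly
  set ρ : ℝ := (c/2) / (A^(d-1) * C) with hρdef
  have hADC : (0:ℝ) < A^(d-1) * C := by positivity
  have hρ0 : 0 < ρ := div_pos (by linarith) hADC
  have hflow : ∀ᶠ n : ℕ in atTop,
      ρ ≤ (∑ k ∈ Finset.range n, (∏ j ∈ Finset.Ico (k + 1) n, (1 - a j) ^ d) * a k ^ d * b k) /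
          (a n ^ (d - 1) * b n) := by
    filter_upwards [hsmall, eventually_ge_atTop (N+1)] with n h1 h2
    have hnN : N ≤ n := by omega
    have hq := hQlow n h2
    have hneg := hNeg n hnN
    have habs := neg_abs_le (∑ k ∈ Finset.range N,
      (∏ j ∈ Finset.Ico (k + 1) n, (1 - a j) ^ d) * a k ^ d * b k)
    have hS_lb : (c/2) * ((n:ℝ)+1) ^ (-μ)
        ≤ ∑ k ∈ Finset.range n, (∏ j ∈ Finset.Ico (k + 1) n, (1 - a j) ^ d) * a k ^ d * b k := by
      rw [hSsplit n hnN]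
      linarith
    rw [le_div_iff₀ (hDpos n)]
    calc ρ * (a n ^ (d-1) * b n) ≤ ρ * (A^(d-1) * C * ((n:ℝ)+1) ^ (-μ)) :=
          mul_le_mul_of_nonneg_left (hDub n hnN) hρ0.le
      _ = (c/2) * ((n:ℝ)+1) ^ (-μ) := by
          rw [hρdef]
          field_simp
      _ ≤ _ := hS_lb
  have hfup : ∀ᶠ n : ℕ in atTop,
      (∑ k ∈ Finset.range n, (∏ j ∈ Finset.Ico (k + 1) n, (1 - a j) ^ d) * a k ^ d * b k) /
          (a n ^ (d - 1) * b n) ≤ (c/2 + c') / (A^(d-1) * cb) := by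
    filter_upwards [hsmall, eventually_ge_atTop (N+1)] with n h1 h2
    have hnN : N ≤ n := by omega
    have hup := hQup n hnN
    have hneg := hNeg n hnN
    have habs := le_abs_self (∑ k ∈ Finset.range N,
      (∏ j ∈ Finset.Ico (k + 1) n, (1 - a j) ^ d) * a k ^ d * b k)
    have hw0 : (0:ℝ) < ((n:ℝ)+1) ^ (-μ) := Real.rpow_pos_of_pos (hx0 n) _
    have hS_ub : (∑ k ∈ Finset.range n, (∏ j ∈ Finset.Ico (k + 1) n, (1 - a j) ^ d) * a k ^ d * b k)
        ≤ (c/2 + c') * ((n:ℝ)+1) ^ (-μ) := by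
      rw [hSsplit n hnN]
      nlinarith [hneg, h1, hup, habs]
    calc (∑ k ∈ Finset.range n, (∏ j ∈ Finset.Ico (k + 1) n, (1 - a j) ^ d) * a k ^ d * b k) /
          (a n ^ (d - 1) * b n)
        ≤ ((c/2 + c') * ((n:ℝ)+1) ^ (-μ)) / (A^(d-1) * cb * ((n:ℝ)+1) ^ (-μ)) := by
          apply div_le_div₀ (by positivity) hS_ub
            (by positivity) (hDlb n hnN)
      _ = (c/2 + c') / (A^(d-1) * cb) := mul_div_mul_right _ _ (ne_of_gt hw0)
  have hbound : IsBoundedUnder (· ≤ ·) atTop (fun n : ℕ =>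
      (∑ k ∈ Finset.range n, (∏ j ∈ Finset.Ico (k + 1) n, (1 - a j) ^ d) * a k ^ d * b k) /
        (a n ^ (d - 1) * b n)) :=
    isBoundedUnder_of_eventually_le hfup
  exact lt_of_lt_of_le hρ0 (le_liminf_of_le hbound.isCoboundedUnder_ge hflow)
end

section
/- Under the black-box model assumptions and the algorithm's step-size conditions, define for step size γ ∈ (0,1): m(t) := ⌊t/γ⌋, U^γ_k := (μ_k − μ*)/√γ, and ρ^γ(t,s) := [t + s − γ·m(t+s)]·U^γ_{m(t+s)}. Then for any fixed T > 0, t > 0 and s ∈ [0,T], ρ^γ(t,s) converges to 0 in probability as γ ↘ 0. -/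
open MeasureTheory ProbabilityTheory Filter
open scoped Topology ENNReal NNReal RealInnerProductSpace

/-- The black-box model together with one run of the SPSA-with-statistical-inference
algorithm (Algorithm 1), excluding the performance/variance recursions (which depend on
the constant step size `γ` and are defined separately). -/
structure BlackBoxSPSA (p : ℕ) where
  p_pos : 0 < p
  /-- the feasible region -/
  feas : Set (EuclideanSpace ℝ (Fin p))
  feas_compact : IsCompact feas
  feas_convex : Convex ℝ feas
  /-- `Θ` is defined by finitely many continuously differentiable convex inequality
  constraints -/
  feas_constraints : ∃ (m : ℕ) (h : Fin m → EuclideanSpace ℝ (Fin p) → ℝ),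
      (∀ j, ContDiff ℝ 1 (h j)) ∧ (∀ j, ConvexOn ℝ Set.univ (h j)) ∧
      feas = {x | ∀ j, h j x ≤ 0}
  /-- the expected performance `μ` -/
  obj : EuclideanSpace ℝ (Fin p) → ℝ
  /-- the standard deviation `σ` -/
  noiseScale : EuclideanSpace ℝ (Fin p) → ℝ
  obj_smooth : ContDiff ℝ 3 obj
  obj_strongConvex : ∃ m : ℝ, 0 < m ∧ StrongConvexOn feas m obj
  /-- the minimizer `θ*` -/
  minimizer : EuclideanSpace ℝ (Fin p)
  minimizer_mem : minimizer ∈ interior feas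
  minimizer_isMinOn : ∀ θ ∈ feas, obj minimizer ≤ obj θ
  minimizer_unique : ∀ θ ∈ feas, obj θ = obj minimizer → θ = minimizer
  noiseScale_nonneg : ∀ θ, 0 ≤ noiseScale θ
  noiseScale_smooth : ContDiff ℝ 2 noiseScale
  /-- the batch size `τ` -/
  τ : ℕ
  τ_pos : 0 < τ
  /-- the optimization step sizes `a_k` -/
  a : ℕ → ℝ
  /-- the perturbation sizes `c_k` -/
  c : ℕ → ℝ
  a_pos : ∀ k, 0 < a k
  c_pos : ∀ k, 0 < c k
  a_not_summable : ¬ Summable a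
  a_sq_summable : Summable (fun k => a k ^ 2)
  c_tendsto_zero : Tendsto c atTop (𝓝 0)
  ac_sq_summable : Summable (fun k => a k * c k ^ 2)
  asq_div_csq_summable : Summable (fun k => a k ^ 2 / c k ^ 2)
  /-- the underlying probability space -/
  (Ω : Type) [mΩ : MeasurableSpace Ω] (P : Measure Ω) [P_prob : IsProbabilityMeasure P]
  /-- the uniform (i.e. rotation-invariant) probability distribution on the unit sphere -/
  (sphereUnif : Measure (EuclideanSpace ℝ (Fin p)))
  [sphereUnif_prob : IsProbabilityMeasure sphereUnif]
  sphereUnif_support : sphereUnif {x | ‖x‖ = 1}ᶜ = 0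
  sphereUnif_invariant :
    ∀ R : EuclideanSpace ℝ (Fin p) ≃ₗᵢ[ℝ] EuclideanSpace ℝ (Fin p),
      Measure.map R sphereUnif = sphereUnif
  /-- the random directions `u_k` -/
  u : ℕ → Ω → EuclideanSpace ℝ (Fin p)
  u_meas : ∀ k, Measurable (u k)
  /-- each `u_k` is uniformly distributed on the unit sphere -/
  u_law : ∀ k, Measure.map (u k) P = sphereUnif
  /-- the `u_k` are independent -/
  u_iid : iIndepFun u P
  /-- the batch-averaged noises of the `+` and `-` perturbation samples -/
  εp : ℕ → Ω → ℝ
  εm : ℕ → Ω → ℝ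
  εp_meas : ∀ k, Measurable (εp k)
  εm_meas : ∀ k, Measurable (εm k)
  /-- the filtration of information available at the start of iteration `k`,
  including the direction `u_k` -/
  ℱ : ℕ → MeasurableSpace Ω
  ℱ_le : ∀ k, ℱ k ≤ mΩ
  ℱ_mono : Monotone ℱ
  u_adapted : ∀ k, Measurable[ℱ k] (u k)
  /-- the parameter-vector iterates `θ_k` -/
  θ : ℕ → Ω → EuclideanSpace ℝ (Fin p)
  θ_meas : ∀ k, Measurable (θ k)
  θ_adapted : ∀ k, Measurable[ℱ k] (θ k)
  θ_init_mem : ∀ ω, θ 0 ω ∈ feas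
  /-- `u_k` is drawn independently of the current iterate -/
  u_indep_θ : ∀ k, IndepFun (u k) (θ k) P
  εp_int : ∀ k, Integrable (εp k) P
  εm_int : ∀ k, Integrable (εm k) P
  εp_sq_int : ∀ k, Integrable (fun ω => εp k ω ^ 2) P
  εm_sq_int : ∀ k, Integrable (fun ω => εm k ω ^ 2) P
  /-- each batch noise is a conditional-mean-zero average of `τ` conditionally
  independent mean-zero unit-variance noises: conditional mean `0` -/
  εp_cond_mean : ∀ k, P[εp k|ℱ k] =ᵐ[P] 0
  εm_cond_mean : ∀ k, P[εm k|ℱ k] =ᵐ[P] 0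
  /-- conditional variance `1/τ` -/
  εp_cond_var : ∀ k, P[fun ω => εp k ω ^ 2|ℱ k] =ᵐ[P] fun _ => 1 / (τ : ℝ)
  εm_cond_var : ∀ k, P[fun ω => εm k ω ^ 2|ℱ k] =ᵐ[P] fun _ => 1 / (τ : ℝ)
  /-- the two perturbation batches are conditionally uncorrelated -/
  ε_cond_uncorr : ∀ k, P[fun ω => εp k ω * εm k ω|ℱ k] =ᵐ[P] 0
  /-- the batch means of the observations at `θ_k ± c_k u_k` -/
  yp : ℕ → Ω → ℝ
  ym : ℕ → Ω → ℝ
  yp_def : ∀ k ω, yp k ω =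
    obj (θ k ω + c k • u k ω) + noiseScale (θ k ω + c k • u k ω) * εp k ω
  ym_def : ∀ k ω, ym k ω =
    obj (θ k ω - c k • u k ω) + noiseScale (θ k ω - c k • u k ω) * εm k ω
  /-- the Euclidean projection onto the feasible region -/
  proj : EuclideanSpace ℝ (Fin p) → EuclideanSpace ℝ (Fin p)
  proj_mem : ∀ x, proj x ∈ feas
  proj_isProj : ∀ x, ∀ y ∈ feas, ‖x - proj x‖ ≤ ‖x - y‖
  /-- the projected SPSA recursion `θ_{k+1} = Π_Θ[θ_k − a_k g_k]` with
  `g_k = ((y_k⁺ − y_k⁻)/(2 c_k)) u_k` -/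
  θ_rec : ∀ k ω,
    θ (k + 1) ω = proj (θ k ω - (a k * ((yp k ω - ym k ω) / (2 * c k))) • u k ω)

attribute [instance] BlackBoxSPSA.mΩ BlackBoxSPSA.P_prob BlackBoxSPSA.sphereUnif_prob

namespace BlackBoxSPSA

variable {p : ℕ}

/-- the batch performance estimate `ȳ_k = (y_k⁺ + y_k⁻)/2` -/
noncomputable def ybar (M : BlackBoxSPSA p) (k : ℕ) (ω : M.Ω) : ℝ :=
  (M.yp k ω + M.ym k ω) / 2

/-- the exponentially smoothed performance estimates
`μ_{k+1} = μ_k + γ (ȳ_k − μ_k)`, started at `μ₀`. -/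
noncomputable def muSeq (M : BlackBoxSPSA p) (γ μ0 : ℝ) : ℕ → M.Ω → ℝ
  | 0 => fun _ => μ0
  | k + 1 => fun ω => M.muSeq γ μ0 k ω + γ * (M.ybar k ω - M.muSeq γ μ0 k ω)

/-- the variance estimates `v_{k+1} = v_k + (1/(k+1))[(ȳ_k − μ_k)² − v_k]`,
started at `v₀`. -/
noncomputable def vSeq (M : BlackBoxSPSA p) (γ μ0 v0 : ℝ) : ℕ → M.Ω → ℝ
  | 0 => fun _ => v0
  | k + 1 => fun ω => M.vSeq γ μ0 v0 k ω +
      (1 / ((k : ℝ) + 1)) * ((M.ybar k ω - M.muSeq γ μ0 k ω) ^ 2 - M.vSeq γ μ0 v0 k ω)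

end BlackBoxSPSA


section Aux

open Pointwise

private lemma abs_le_one_add_sq' (x : ℝ) : |x| ≤ 1 + x ^ 2 := by
  nlinarith [sq_nonneg (|x| - 1), abs_nonneg x, sq_abs x]

namespace BlackBoxSPSA

variable {p : ℕ}

lemma theta_mem_feas (M : BlackBoxSPSA p) : ∀ k ω, M.θ k ω ∈ M.feas := by
  intro k
  induction k with
  | zero => exact M.θ_init_mem
  | succ n ih => intro ω; rw [M.θ_rec]; exact M.proj_mem _

lemma u_norm_ae_one (M : BlackBoxSPSA p) (k : ℕ) : ∀ᵐ ω ∂M.P, ‖M.u k ω‖ = 1 := by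
  have hms : MeasurableSet {x : EuclideanSpace ℝ (Fin p) | ‖x‖ = 1} :=
    measurableSet_eq_fun (by fun_prop) measurable_const
  have h0 : M.P (M.u k ⁻¹' {x | ‖x‖ = 1}ᶜ) = 0 := by
    rw [← Measure.map_apply (M.u_meas k) hms.compl, M.u_law]
    exact M.sphereUnif_support
  filter_upwards [measure_eq_zero_iff_ae_notMem.mp h0] with ω h
  simpa using h

lemma eps_sq_integral (M : BlackBoxSPSA p) (k : ℕ) :
    (∫ ω, M.εp k ω ^ 2 ∂M.P) = 1 / (M.τ : ℝ) ∧
    (∫ ω, M.εm k ω ^ 2 ∂M.P) = 1 / (M.τ : ℝ) := by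
  constructor
  · calc (∫ ω, M.εp k ω ^ 2 ∂M.P)
        = ∫ ω, (M.P[fun ω => M.εp k ω ^ 2|M.ℱ k]) ω ∂M.P :=
          (integral_condExp (M.ℱ_le k)).symm
      _ = ∫ _, (1 / (M.τ : ℝ)) ∂M.P := integral_congr_ae (M.εp_cond_var k)
      _ = 1 / (M.τ : ℝ) := by simp
  · calc (∫ ω, M.εm k ω ^ 2 ∂M.P)
        = ∫ ω, (M.P[fun ω => M.εm k ω ^ 2|M.ℱ k]) ω ∂M.P :=
          (integral_condExp (M.ℱ_le k)).symm
      _ = ∫ _, (1 / (M.τ : ℝ)) ∂M.P := integral_congr_ae (M.εm_cond_var k)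
      _ = 1 / (M.τ : ℝ) := by simp

lemma eps_abs_integral_le (M : BlackBoxSPSA p) (k : ℕ) :
    (∫ ω, |M.εp k ω| ∂M.P) ≤ 1 + 1 / (M.τ : ℝ) ∧
    (∫ ω, |M.εm k ω| ∂M.P) ≤ 1 + 1 / (M.τ : ℝ) := by
  constructor
  · calc (∫ ω, |M.εp k ω| ∂M.P) ≤ ∫ ω, (1 + M.εp k ω ^ 2) ∂M.P :=
          integral_mono (M.εp_int k).abs ((integrable_const 1).add (M.εp_sq_int k))
            (fun ω => abs_le_one_add_sq' _)
      _ = 1 + 1 / (M.τ : ℝ) := by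
          rw [integral_add (integrable_const 1) (M.εp_sq_int k),
            (M.eps_sq_integral k).1]; simp
  · calc (∫ ω, |M.εm k ω| ∂M.P) ≤ ∫ ω, (1 + M.εm k ω ^ 2) ∂M.P :=
          integral_mono (M.εm_int k).abs ((integrable_const 1).add (M.εm_sq_int k))
            (fun ω => abs_le_one_add_sq' _)
      _ = 1 + 1 / (M.τ : ℝ) := by
          rw [integral_add (integrable_const 1) (M.εm_sq_int k),
            (M.eps_sq_integral k).2]; simp

/-- uniform bound on the mean absolute value of the performance estimates `ȳ_k`. -/
lemma ybar_bound (M : BlackBoxSPSA p) :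
    ∃ B : ℝ, 0 ≤ B ∧ ∀ k, Integrable (M.ybar k) M.P ∧
      (∫ ω, |M.ybar k ω| ∂M.P) ≤ B := by
  -- a uniform bound on the perturbation sizes
  obtain ⟨cB, hcB⟩ : ∃ cB, ∀ k, M.c k ≤ cB := by
    obtain ⟨cB, hcB⟩ := M.c_tendsto_zero.bddAbove_range
    exact ⟨cB, fun k => hcB (Set.mem_range_self k)⟩
  -- a compact set containing all evaluation points
  set K : Set (EuclideanSpace ℝ (Fin p)) :=
    M.feas + Metric.closedBall (0 : EuclideanSpace ℝ (Fin p)) cB with hKdef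
  have hK : IsCompact K := M.feas_compact.add (isCompact_closedBall _ _)
  obtain ⟨C1, hC1⟩ := hK.exists_bound_of_continuousOn M.obj_smooth.continuous.continuousOn
  obtain ⟨C2, hC2⟩ :=
    hK.exists_bound_of_continuousOn M.noiseScale_smooth.continuous.continuousOn
  set C : ℝ := max (max C1 C2) 0 with hCdef
  have hC0 : 0 ≤ C := le_max_right _ _
  have hCobj : ∀ x ∈ K, |M.obj x| ≤ C := fun x hx =>
    le_trans (by simpa using hC1 x hx) (le_trans (le_max_left _ _) (le_max_left _ _))
  have hCns : ∀ x ∈ K, |M.noiseScale x| ≤ C := fun x hx =>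
    le_trans (by simpa using hC2 x hx) (le_trans (le_max_right _ _) (le_max_left _ _))
  -- membership of the evaluation points in `K`
  have hmemp : ∀ k ω, ‖M.u k ω‖ = 1 → M.θ k ω + M.c k • M.u k ω ∈ K := by
    intro k ω hω
    refine Set.add_mem_add (M.theta_mem_feas k ω) ?_
    simp only [Metric.mem_closedBall, dist_zero_right, norm_smul, hω, mul_one,
      Real.norm_eq_abs, abs_of_pos (M.c_pos k)]
    exact hcB k
  have hmemm : ∀ k ω, ‖M.u k ω‖ = 1 → M.θ k ω - M.c k • M.u k ω ∈ K := by
    intro k ω hω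
    have : M.θ k ω - M.c k • M.u k ω = M.θ k ω + (-(M.c k • M.u k ω)) := by
      rw [sub_eq_add_neg]
    rw [this]
    refine Set.add_mem_add (M.theta_mem_feas k ω) ?_
    simp only [Metric.mem_closedBall, dist_zero_right, norm_neg, norm_smul, hω, mul_one,
      Real.norm_eq_abs, abs_of_pos (M.c_pos k)]
    exact hcB k
  -- a.e. pointwise bounds on `y⁺` and `y⁻`
  have hypb : ∀ k, ∀ᵐ ω ∂M.P, |M.yp k ω| ≤ C + C * |M.εp k ω| := by
    intro k
    filter_upwards [M.u_norm_ae_one k] with ω hω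
    rw [M.yp_def]
    calc |M.obj (M.θ k ω + M.c k • M.u k ω) +
          M.noiseScale (M.θ k ω + M.c k • M.u k ω) * M.εp k ω|
        ≤ |M.obj (M.θ k ω + M.c k • M.u k ω)| +
          |M.noiseScale (M.θ k ω + M.c k • M.u k ω)| * |M.εp k ω| := by
          rw [← abs_mul]; exact abs_add_le _ _
      _ ≤ C + C * |M.εp k ω| := by
          have h1 := hCobj _ (hmemp k ω hω)
          have h2 := hCns _ (hmemp k ω hω)
          have h3 := abs_nonneg (M.εp k ω)
          nlinarith [abs_nonneg (M.noiseScale (M.θ k ω + M.c k • M.u k ω))]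
  have hymb : ∀ k, ∀ᵐ ω ∂M.P, |M.ym k ω| ≤ C + C * |M.εm k ω| := by
    intro k
    filter_upwards [M.u_norm_ae_one k] with ω hω
    rw [M.ym_def]
    calc |M.obj (M.θ k ω - M.c k • M.u k ω) +
          M.noiseScale (M.θ k ω - M.c k • M.u k ω) * M.εm k ω|
        ≤ |M.obj (M.θ k ω - M.c k • M.u k ω)| +
          |M.noiseScale (M.θ k ω - M.c k • M.u k ω)| * |M.εm k ω| := by
          rw [← abs_mul]; exact abs_add_le _ _
      _ ≤ C + C * |M.εm k ω| := by
          have h1 := hCobj _ (hmemm k ω hω)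
          have h2 := hCns _ (hmemm k ω hω)
          have h3 := abs_nonneg (M.εm k ω)
          nlinarith [abs_nonneg (M.noiseScale (M.θ k ω - M.c k • M.u k ω))]
  -- measurability
  have hypm : ∀ k, Measurable (M.yp k) := by
    intro k
    have : M.yp k = fun ω =>
        M.obj (M.θ k ω + M.c k • M.u k ω) +
          M.noiseScale (M.θ k ω + M.c k • M.u k ω) * M.εp k ω := funext (M.yp_def k)
    rw [this]
    have hm : Measurable (fun ω => M.θ k ω + M.c k • M.u k ω) :=
      (M.θ_meas k).add ((M.u_meas k).const_smul (M.c k))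
    exact (M.obj_smooth.continuous.measurable.comp hm).add
      ((M.noiseScale_smooth.continuous.measurable.comp hm).mul (M.εp_meas k))
  have hymm : ∀ k, Measurable (M.ym k) := by
    intro k
    have : M.ym k = fun ω =>
        M.obj (M.θ k ω - M.c k • M.u k ω) +
          M.noiseScale (M.θ k ω - M.c k • M.u k ω) * M.εm k ω := funext (M.ym_def k)
    rw [this]
    have hm : Measurable (fun ω => M.θ k ω - M.c k • M.u k ω) :=
      (M.θ_meas k).sub ((M.u_meas k).const_smul (M.c k))
    exact (M.obj_smooth.continuous.measurable.comp hm).add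
      ((M.noiseScale_smooth.continuous.measurable.comp hm).mul (M.εm_meas k))
  -- integrability
  have hgp : ∀ k, Integrable (fun ω => C + C * |M.εp k ω|) M.P := fun k =>
    (integrable_const C).add ((M.εp_int k).abs.const_mul C)
  have hgm : ∀ k, Integrable (fun ω => C + C * |M.εm k ω|) M.P := fun k =>
    (integrable_const C).add ((M.εm_int k).abs.const_mul C)
  have hyp_int : ∀ k, Integrable (M.yp k) M.P := by
    intro k
    refine (hgp k).mono' (hypm k).aestronglyMeasurable ?_
    filter_upwards [hypb k] with ω hω
    simpa using hω
  have hym_int : ∀ k, Integrable (M.ym k) M.P := by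
    intro k
    refine (hgm k).mono' (hymm k).aestronglyMeasurable ?_
    filter_upwards [hymb k] with ω hω
    simpa using hω
  -- integral bounds
  have hτ : (0:ℝ) ≤ 1 / (M.τ : ℝ) := by positivity
  have hyp_ib : ∀ k, (∫ ω, |M.yp k ω| ∂M.P) ≤ C + C * (1 + 1 / (M.τ : ℝ)) := by
    intro k
    calc (∫ ω, |M.yp k ω| ∂M.P) ≤ ∫ ω, (C + C * |M.εp k ω|) ∂M.P :=
          integral_mono_ae (hyp_int k).abs (hgp k) (hypb k)
      _ = C + C * ∫ ω, |M.εp k ω| ∂M.P := by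
          rw [integral_add (integrable_const C) ((M.εp_int k).abs.const_mul C),
            integral_const_mul]; simp
      _ ≤ C + C * (1 + 1 / (M.τ : ℝ)) := by
          gcongr
          exact (M.eps_abs_integral_le k).1
  have hym_ib : ∀ k, (∫ ω, |M.ym k ω| ∂M.P) ≤ C + C * (1 + 1 / (M.τ : ℝ)) := by
    intro k
    calc (∫ ω, |M.ym k ω| ∂M.P) ≤ ∫ ω, (C + C * |M.εm k ω|) ∂M.P :=
          integral_mono_ae (hym_int k).abs (hgm k) (hymb k)
      _ = C + C * ∫ ω, |M.εm k ω| ∂M.P := by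
          rw [integral_add (integrable_const C) ((M.εm_int k).abs.const_mul C),
            integral_const_mul]; simp
      _ ≤ C + C * (1 + 1 / (M.τ : ℝ)) := by
          gcongr
          exact (M.eps_abs_integral_le k).2
  refine ⟨C + C * (1 + 1 / (M.τ : ℝ)), by positivity, fun k => ?_⟩
  have hybar_int : Integrable (M.ybar k) M.P := by
    have : M.ybar k = fun ω => (M.yp k ω + M.ym k ω) / 2 := rfl
    rw [this]
    exact ((hyp_int k).add (hym_int k)).div_const 2
  refine ⟨hybar_int, ?_⟩
  calc (∫ ω, |M.ybar k ω| ∂M.P)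
      ≤ ∫ ω, (|M.yp k ω| + |M.ym k ω|) / 2 ∂M.P := by
        refine integral_mono hybar_int.abs
          (((hyp_int k).abs.add (hym_int k).abs).div_const 2) (fun ω => ?_)
        have : M.ybar k ω = (M.yp k ω + M.ym k ω) / 2 := rfl
        rw [this, abs_div]
        simp only [abs_two]
        gcongr
        exact abs_add_le _ _
    _ = ((∫ ω, |M.yp k ω| ∂M.P) + ∫ ω, |M.ym k ω| ∂M.P) / 2 := by
        rw [integral_div, integral_add (hyp_int k).abs (hym_int k).abs]
    _ ≤ C + C * (1 + 1 / (M.τ : ℝ)) := by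
        have := hyp_ib k
        have := hym_ib k
        linarith

/-- uniform bound on the mean absolute value of the smoothed estimates `μ_k`. -/
lemma muSeq_bound (M : BlackBoxSPSA p) (μ0 : ℝ) {B γ : ℝ} (hB : 0 ≤ B)
    (hyb : ∀ k, Integrable (M.ybar k) M.P ∧ (∫ ω, |M.ybar k ω| ∂M.P) ≤ B)
    (hγ0 : 0 < γ) (hγ1 : γ < 1) (k : ℕ) :
    Integrable (M.muSeq γ μ0 k) M.P ∧
      (∫ ω, |M.muSeq γ μ0 k ω| ∂M.P) ≤ max |μ0| B := by
  induction k with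
  | zero =>
    constructor
    · exact integrable_const μ0
    · have : (∫ ω, |M.muSeq γ μ0 0 ω| ∂M.P) = |μ0| := by
        simp [BlackBoxSPSA.muSeq]
      rw [this]; exact le_max_left _ _
  | succ n ih =>
    have heq : M.muSeq γ μ0 (n + 1) =
        fun ω => M.muSeq γ μ0 n ω + γ * (M.ybar n ω - M.muSeq γ μ0 n ω) := rfl
    have hint : Integrable (M.muSeq γ μ0 (n + 1)) M.P := by
      rw [heq]
      exact ih.1.add (((hyb n).1.sub ih.1).const_mul γ)
    refine ⟨hint, ?_⟩
    have hpt : ∀ ω, |M.muSeq γ μ0 (n + 1) ω| ≤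
        (1 - γ) * |M.muSeq γ μ0 n ω| + γ * |M.ybar n ω| := by
      intro ω
      have h1 : M.muSeq γ μ0 (n + 1) ω =
          (1 - γ) * M.muSeq γ μ0 n ω + γ * M.ybar n ω := by
        rw [heq]; ring
      rw [h1]
      calc |(1 - γ) * M.muSeq γ μ0 n ω + γ * M.ybar n ω|
          ≤ |(1 - γ) * M.muSeq γ μ0 n ω| + |γ * M.ybar n ω| := abs_add_le _ _
        _ = (1 - γ) * |M.muSeq γ μ0 n ω| + γ * |M.ybar n ω| := by
            rw [abs_mul, abs_mul, abs_of_pos (by linarith : (0:ℝ) < 1 - γ),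
              abs_of_pos hγ0]
    calc (∫ ω, |M.muSeq γ μ0 (n + 1) ω| ∂M.P)
        ≤ ∫ ω, ((1 - γ) * |M.muSeq γ μ0 n ω| + γ * |M.ybar n ω|) ∂M.P :=
          integral_mono hint.abs
            ((ih.1.abs.const_mul _).add ((hyb n).1.abs.const_mul _))
            hpt
      _ = (1 - γ) * (∫ ω, |M.muSeq γ μ0 n ω| ∂M.P) + γ * ∫ ω, |M.ybar n ω| ∂M.P := by
          rw [integral_add (ih.1.abs.const_mul _) ((hyb n).1.abs.const_mul _),
            integral_const_mul, integral_const_mul]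
      _ ≤ max |μ0| B := by
          have h2 := ih.2
          have h3 := (hyb n).2
          have h4 : B ≤ max |μ0| B := le_max_right _ _
          nlinarith [integral_nonneg (f := fun ω => |M.muSeq γ μ0 n ω|) (fun ω => abs_nonneg (M.muSeq γ μ0 n ω)) (μ := M.P),
            integral_nonneg (f := fun ω => |M.ybar n ω|) (fun ω => abs_nonneg (M.ybar n ω)) (μ := M.P)]

end BlackBoxSPSA

/-- With `m(t) := ⌊t/γ⌋`, `U^γ_k := (μ_k − μ*)/√γ` and
`ρ^γ(t,s) := [t + s − γ·m(t+s)]·U^γ_{m(t+s)}`, for any fixed `T > 0`, `t > 0` and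
`s ∈ [0,T]`, `ρ^γ(t,s)` converges to `0` in probability as `γ ↘ 0`. -/
theorem rho_tendsto_zero_in_probability {p : ℕ} (M : BlackBoxSPSA p) (μ0 : ℝ)
    (T t s : ℝ) (hT : 0 < T) (ht : 0 < t) (hs : s ∈ Set.Icc (0 : ℝ) T) :
    ∀ ε > 0,
      Tendsto
        (fun γ : ℝ => M.P {ω | ε ≤
          |(t + s - γ * (⌊(t + s) / γ⌋₊ : ℝ)) *
            ((M.muSeq γ μ0 ⌊(t + s) / γ⌋₊ ω - M.obj M.minimizer) / Real.sqrt γ)|})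
        (𝓝[Set.Ioo (0 : ℝ) 1] 0) (𝓝 0) := by
  intro ε hε
  obtain ⟨B, hB0, hyb⟩ := M.ybar_bound
  set D : ℝ := max |μ0| B + |M.obj M.minimizer| with hDdef
  have hD0 : 0 ≤ D := by positivity
  have hts : 0 < t + s := by linarith [hs.1]
  -- the dominating function
  have hgtend :
      Tendsto (fun γ : ℝ => ENNReal.ofReal (Real.sqrt γ * D / ε))
        (𝓝[Set.Ioo (0 : ℝ) 1] 0) (𝓝 0) := by
    have hc : Continuous fun γ : ℝ => ENNReal.ofReal (Real.sqrt γ * D / ε) :=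
      ENNReal.continuous_ofReal.comp ((Real.continuous_sqrt.mul continuous_const).div_const ε)
    have := (hc.tendsto 0).mono_left (nhdsWithin_le_nhds (s := Set.Ioo (0:ℝ) 1))
    simpa using this
  refine tendsto_of_tendsto_of_tendsto_of_le_of_le' tendsto_const_nhds hgtend
    (Filter.Eventually.of_forall fun γ => zero_le) ?_
  filter_upwards [self_mem_nhdsWithin] with γ hγ
  obtain ⟨hγ0, hγ1⟩ := hγ
  set m : ℕ := ⌊(t + s) / γ⌋₊ with hm
  have hsq : 0 < Real.sqrt γ := Real.sqrt_pos.2 hγ0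
  -- bound on the interpolation coefficient
  have hcoef0 : 0 ≤ t + s - γ * (m : ℝ) := by
    have h1 : (m : ℝ) ≤ (t + s) / γ := Nat.floor_le (by positivity)
    have := (le_div_iff₀ hγ0).1 h1
    linarith
  have hcoef1 : t + s - γ * (m : ℝ) ≤ γ := by
    have h1 : (t + s) / γ < (m : ℝ) + 1 := Nat.lt_floor_add_one _
    have := (div_lt_iff₀ hγ0).1 h1
    nlinarith
  -- the quantity of interest and its integrable dominating bound
  have hmu := M.muSeq_bound μ0 hB0 hyb hγ0 hγ1 m
  set f : M.Ω → ℝ := fun ω =>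
    |(t + s - γ * (m : ℝ)) * ((M.muSeq γ μ0 m ω - M.obj M.minimizer) / Real.sqrt γ)| with hf
  have hf_int : Integrable f M.P := by
    refine Integrable.abs ?_
    exact (((hmu.1.sub (integrable_const _)).div_const _).const_mul _)
  have hf_nonneg : 0 ≤ᵐ[M.P] f := Filter.Eventually.of_forall fun ω => abs_nonneg _
  have hptw : ∀ ω, f ω ≤ Real.sqrt γ * (|M.muSeq γ μ0 m ω| + |M.obj M.minimizer|) := by
    intro ω
    rw [hf]
    calc |(t + s - γ * (m : ℝ)) * ((M.muSeq γ μ0 m ω - M.obj M.minimizer) / Real.sqrt γ)|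
        = (t + s - γ * (m : ℝ)) * (|M.muSeq γ μ0 m ω - M.obj M.minimizer| / Real.sqrt γ) := by
          rw [abs_mul, abs_div, abs_of_nonneg hcoef0, abs_of_pos hsq]
      _ ≤ γ * ((|M.muSeq γ μ0 m ω| + |M.obj M.minimizer|) / Real.sqrt γ) := by
          gcongr
          exact abs_sub _ _
      _ = Real.sqrt γ * (|M.muSeq γ μ0 m ω| + |M.obj M.minimizer|) := by
          rw [mul_div_assoc', mul_comm γ, ← mul_div_assoc', Real.div_sqrt, mul_comm]
  have hint_bound : (∫ ω, f ω ∂M.P) ≤ Real.sqrt γ * D := by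
    calc (∫ ω, f ω ∂M.P)
        ≤ ∫ ω, Real.sqrt γ * (|M.muSeq γ μ0 m ω| + |M.obj M.minimizer|) ∂M.P :=
          integral_mono hf_int
            ((hmu.1.abs.add (integrable_const _)).const_mul _) hptw
      _ = Real.sqrt γ * ((∫ ω, |M.muSeq γ μ0 m ω| ∂M.P) + |M.obj M.minimizer|) := by
          rw [integral_const_mul, integral_add hmu.1.abs (integrable_const _)]
          simp
      _ ≤ Real.sqrt γ * D := by
          rw [hDdef]
          gcongr
          exact hmu.2
  -- Markov's inequality
  have hmarkov := mul_meas_ge_le_integral_of_nonneg hf_nonneg hf_int ε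
  have hfin : M.P {ω | ε ≤ f ω} ≠ ⊤ := measure_ne_top _ _
  have htoReal : (M.P {ω | ε ≤ f ω}).toReal ≤ Real.sqrt γ * D / ε := by
    rw [div_eq_inv_mul]
    have h1 : ε * (M.P {ω | ε ≤ f ω}).toReal ≤ Real.sqrt γ * D :=
      le_trans hmarkov hint_bound
    calc (M.P {ω | ε ≤ f ω}).toReal
        = ε⁻¹ * (ε * (M.P {ω | ε ≤ f ω}).toReal) := by
          field_simp
      _ ≤ ε⁻¹ * (Real.sqrt γ * D) := by gcongr
  calc M.P {ω | ε ≤ f ω}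
      = ENNReal.ofReal (M.P {ω | ε ≤ f ω}).toReal := (ENNReal.ofReal_toReal hfin).symm
    _ ≤ ENNReal.ofReal (Real.sqrt γ * D / ε) := ENNReal.ofReal_le_ofReal htoReal
end Aux
end

section
/- Let μ : ℝ^p → ℝ be three times continuously differentiable and let Θ ⊂ ℝ^p be compact. Then there exists a constant K > 0 such that for every θ ∈ Θ, every c ∈ (0,1], and u uniformly distributed on the unit sphere S^{p−1} ⊂ ℝ^p, the simultaneous-perturbation gradient estimator satisfies ‖E[((μ(θ + cu) − μ(θ − cu))/(2c))·u] − (1/p)∇μ(θ)‖ ≤ K c², where ‖·‖ is the Euclidean norm. -/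
open MeasureTheory

section aux
variable {p : ℕ}

lemma sphere_ae (ν : Measure (EuclideanSpace ℝ (Fin p))) (hsupp : ν {x | ‖x‖ = 1}ᶜ = 0) :
    ∀ᵐ u ∂ν, ‖u‖ = 1 := by
  rw [ae_iff]; exact hsupp

lemma integrable_of_sphere {F : Type*} [NormedAddCommGroup F]
    (ν : Measure (EuclideanSpace ℝ (Fin p))) [IsProbabilityMeasure ν]
    (hsupp : ν {x | ‖x‖ = 1}ᶜ = 0)
    {f : (EuclideanSpace ℝ (Fin p)) → F} (hf : Continuous f) : Integrable f ν := by
  obtain ⟨C, hC⟩ := (isCompact_sphere (0 : EuclideanSpace ℝ (Fin p)) 1).exists_bound_of_continuousOn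
    hf.continuousOn
  refine Integrable.mono' (integrable_const C) hf.aestronglyMeasurable ?_
  filter_upwards [sphere_ae ν hsupp] with u hu
  exact hC u (by simpa [mem_sphere_iff_norm] using hu)

variable (ν : Measure (EuclideanSpace ℝ (Fin p))) [IsProbabilityMeasure ν]
  (hinv : ∀ R : EuclideanSpace ℝ (Fin p) ≃ₗᵢ[ℝ] EuclideanSpace ℝ (Fin p),
      Measure.map R ν = ν)
include hinv

-- change of variables along an isometry
lemma integral_rot {F : Type*} [NormedAddCommGroup F] [NormedSpace ℝ F]
    (R : EuclideanSpace ℝ (Fin p) ≃ₗᵢ[ℝ] EuclideanSpace ℝ (Fin p))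
    {f : (EuclideanSpace ℝ (Fin p)) → F} (hf : Continuous f) :
    ∫ u, f u ∂ν = ∫ u, f (R u) ∂ν := by
  conv_lhs => rw [← hinv R]
  rw [integral_map (R.continuous.measurable.aemeasurable) (by
    rw [hinv R]; exact hf.aestronglyMeasurable)]

lemma moment_off (i j : Fin p) (hij : i ≠ j) : ∫ u, u i * u j ∂ν = 0 := by
  classical
  set R : EuclideanSpace ℝ (Fin p) ≃ₗᵢ[ℝ] EuclideanSpace ℝ (Fin p) :=
    LinearIsometryEquiv.piLpCongrRight 2
      (fun k => if k = i then LinearIsometryEquiv.neg ℝ else LinearIsometryEquiv.refl ℝ ℝ)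
  have hR : ∀ (u : EuclideanSpace ℝ (Fin p)) (k : Fin p),
      R u k = if k = i then -u k else u k := by
    intro u k
    rcases eq_or_ne k i with h | h
    · subst h
      simp [R, LinearIsometryEquiv.piLpCongrRight_apply]
    · simp [R, LinearIsometryEquiv.piLpCongrRight_apply, h]
  have hcont : Continuous fun u : EuclideanSpace ℝ (Fin p) => u i * u j :=
    ((continuous_apply i).comp (PiLp.continuous_ofLp 2 _)).mul
      ((continuous_apply j).comp (PiLp.continuous_ofLp 2 _))
  have := integral_rot ν hinv R hcont
  have heq : ∀ u : EuclideanSpace ℝ (Fin p), R u i * R u j = -(u i * u j) := by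
    intro u
    rw [hR, hR]
    simp [hij.symm, if_neg]
  rw [this]
  simp only [heq, integral_neg] at this ⊢
  linarith [this]

lemma moment_diag (i j : Fin p) : ∫ u, u i * u i ∂ν = ∫ u, u j * u j ∂ν := by
  set R : EuclideanSpace ℝ (Fin p) ≃ₗᵢ[ℝ] EuclideanSpace ℝ (Fin p) :=
    LinearIsometryEquiv.piLpCongrLeft 2 ℝ ℝ (Equiv.swap i j)
  have hR : ∀ (u : EuclideanSpace ℝ (Fin p)) (k : Fin p),
      R u k = u (Equiv.swap i j k) := by
    intro u k
    simp [R, LinearIsometryEquiv.piLpCongrLeft_apply, Equiv.piCongrLeft'_apply,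
      Equiv.symm_apply_eq]
  have hcont : Continuous fun u : EuclideanSpace ℝ (Fin p) => u i * u i :=
    ((continuous_apply i).comp (PiLp.continuous_ofLp 2 _)).mul
      ((continuous_apply i).comp (PiLp.continuous_ofLp 2 _))
  have := integral_rot ν hinv R hcont
  rw [this]
  congr 1
  funext u
  rw [hR, Equiv.swap_apply_left]
end aux

section aux2
variable {p : ℕ}
variable (ν : Measure (EuclideanSpace ℝ (Fin p))) [IsProbabilityMeasure ν]
  (hsupp : ν {x | ‖x‖ = 1}ᶜ = 0)
  (hinv : ∀ R : EuclideanSpace ℝ (Fin p) ≃ₗᵢ[ℝ] EuclideanSpace ℝ (Fin p),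
      Measure.map R ν = ν)
lemma cont_coord (i : Fin p) : Continuous fun u : EuclideanSpace ℝ (Fin p) => u i :=
  (continuous_apply i).comp (PiLp.continuous_ofLp 2 _)

include hsupp hinv

lemma moment_diag_val (hp : 1 ≤ p) (i : Fin p) :
    ∫ u, u i * u i ∂ν = 1 / p := by
  have hint : ∀ j : Fin p, Integrable (fun u : EuclideanSpace ℝ (Fin p) => u j * u j) ν :=
    fun j => integrable_of_sphere ν hsupp ((cont_coord j).mul (cont_coord j))
  have hsum : ∑ j : Fin p, ∫ u, u j * u j ∂ν = 1 := by
    rw [← integral_finset_sum _ (fun j _ => hint j)]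
    have : ∫ u, (∑ j : Fin p, u j * u j) ∂ν = ∫ (_ : EuclideanSpace ℝ (Fin p)), (1 : ℝ) ∂ν := by
      refine integral_congr_ae ?_
      filter_upwards [sphere_ae ν hsupp] with u hu
      have h2 : ∑ j : Fin p, u j ^ 2 = 1 := by
        have := congrArg (· ^ 2) hu
        rw [EuclideanSpace.norm_eq u] at this
        simpa [Real.sq_sqrt (Finset.sum_nonneg fun j _ => sq_nonneg (u j))] using this
      simpa [sq] using h2
    rw [this]
    simp
  have hall : ∀ j : Fin p, ∫ u, u j * u j ∂ν = ∫ u, u i * u i ∂ν :=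
    fun j => moment_diag ν hinv j i
  rw [Finset.sum_congr rfl (fun j _ => hall j), Finset.sum_const, Finset.card_univ,
    Fintype.card_fin, nsmul_eq_mul] at hsum
  have hp0 : (p : ℝ) ≠ 0 := by positivity
  field_simp at hsum ⊢
  linarith

lemma moment_vec (hp : 1 ≤ p) (w : EuclideanSpace ℝ (Fin p)) :
    ∫ u, (inner ℝ w u : ℝ) • u ∂ν = (1 / (p : ℝ)) • w := by
  have hcont : Continuous fun u : EuclideanSpace ℝ (Fin p) => (inner ℝ w u : ℝ) • u := by
    fun_prop
  have hint : Integrable (fun u : EuclideanSpace ℝ (Fin p) => (inner ℝ w u : ℝ) • u) ν :=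
    integrable_of_sphere ν hsupp hcont
  ext k
  have hL := (EuclideanSpace.proj (𝕜 := ℝ) k).integral_comp_comm hint
  have hLHS : (∫ u, (inner ℝ w u : ℝ) • u ∂ν) k = ∫ u, (inner ℝ w u : ℝ) * u k ∂ν := by
    rw [show (∫ u, (inner ℝ w u : ℝ) • u ∂ν) k
        = (EuclideanSpace.proj (𝕜 := ℝ) k) (∫ u, (inner ℝ w u : ℝ) • u ∂ν) from rfl, ← hL]
    refine integral_congr_ae (Filter.Eventually.of_forall fun u => ?_)
    simp [smul_eq_mul]
  rw [hLHS]
  have hterm : ∀ u : EuclideanSpace ℝ (Fin p),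
      (inner ℝ w u : ℝ) * u k = ∑ j : Fin p, w j * (u j * u k) := by
    intro u
    rw [PiLp.inner_apply]
    simp only [RCLike.inner_apply, conj_trivial]
    rw [Finset.sum_mul]
    exact Finset.sum_congr rfl fun j _ => by ring
  simp only [hterm]
  rw [integral_finset_sum _ (f := fun j (u : EuclideanSpace ℝ (Fin p)) => w j * (u j * u k)) (fun j _ =>
    ((integrable_of_sphere ν hsupp ((cont_coord j).mul (cont_coord k))).const_mul (w j)))]
  have : ∀ j : Fin p, ∫ u, w j * (u j * u k) ∂ν = w j * ∫ u, u j * u k ∂ν :=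
    fun j => integral_const_mul _ _
  simp only [this]
  have hval : ∀ j : Fin p, ∫ u, u j * u k ∂ν = if j = k then 1 / (p : ℝ) else 0 := by
    intro j
    by_cases h : j = k
    · subst h; simp [moment_diag_val ν hsupp hinv hp j]
    · simp [h, moment_off ν hinv j k h]
  simp only [hval, mul_ite, mul_zero, Finset.sum_ite_eq', Finset.mem_univ, if_true]
  show w k * (1 / (p : ℝ)) = ((1 / (p : ℝ)) • w) k
  rw [PiLp.smul_apply, smul_eq_mul]
  ring
end aux2

noncomputable instance instA {E : Type*} [NormedAddCommGroup E] [NormedSpace ℝ E] :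
    NormedAddCommGroup (E →L[ℝ] E →L[ℝ] ℝ) := inferInstance
noncomputable instance instB {E : Type*} [NormedAddCommGroup E] [NormedSpace ℝ E] :
    NormedSpace ℝ (E →L[ℝ] E →L[ℝ] ℝ) := inferInstance

lemma taylor_sym {E : Type*} [NormedAddCommGroup E] [NormedSpace ℝ E]
    (f : E → ℝ) (hf : ContDiff ℝ 3 f) (θ v : E) (M : ℝ)
    (hM : ∀ x ∈ Metric.closedBall θ ‖v‖, ‖fderiv ℝ (fderiv ℝ (fderiv ℝ f)) x‖ ≤ M) :
    |f (θ + v) - f (θ - v) - 2 * fderiv ℝ f θ v| ≤ 2 * M * ‖v‖ ^ 3 := by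
  set h := fderiv ℝ f with hh_def
  set g := fderiv ℝ h with hg_def
  have hh : ContDiff ℝ 2 h := hf.fderiv_right (by norm_num)
  have hg : ContDiff ℝ 1 g := hh.fderiv_right (by norm_num)
  have hM0 : 0 ≤ M :=
    le_trans (norm_nonneg _) (hM θ (Metric.mem_closedBall_self (norm_nonneg v)))
  have hs : Convex ℝ (Metric.closedBall θ ‖v‖) := convex_closedBall _ _
  have hθs : θ ∈ Metric.closedBall θ ‖v‖ := Metric.mem_closedBall_self (norm_nonneg v)
  -- step 1 : Lipschitz bound on g
  have step1 : ∀ x ∈ Metric.closedBall θ ‖v‖, ‖g x - g θ‖ ≤ M * ‖v‖ := by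
    intro x hx
    have h1 : ‖g x - g θ‖ ≤ M * ‖x - θ‖ :=
      hs.norm_image_sub_le_of_norm_fderiv_le
        (fun y _ => (hg.differentiable one_ne_zero).differentiableAt) hM hθs hx
    refine h1.trans (mul_le_mul_of_nonneg_left ?_ hM0)
    exact mem_closedBall_iff_norm.mp hx
  -- step 2 : first-order Taylor remainder for h
  have step2 : ∀ x ∈ Metric.closedBall θ ‖v‖,
      ‖h x - h θ - g θ (x - θ)‖ ≤ M * ‖v‖ * ‖x - θ‖ := by
    intro x hx
    exact hs.norm_image_sub_le_of_norm_fderiv_le'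
      (fun y _ => (hh.differentiable (by norm_num)).differentiableAt) step1 hθs hx
  -- memberships
  have hmem : ∀ t ∈ Set.Icc (0:ℝ) 1, ∀ s : ℝ, |s| = 1 →
      θ + (s * t) • v ∈ Metric.closedBall θ ‖v‖ := by
    intro t ht s hs1
    rw [Metric.mem_closedBall, dist_eq_norm]
    have : ‖θ + (s * t) • v - θ‖ = |s * t| * ‖v‖ := by
      rw [add_sub_cancel_left, norm_smul, Real.norm_eq_abs]
    rw [this, abs_mul, hs1, one_mul]
    nlinarith [ht.1, ht.2, norm_nonneg v, abs_of_nonneg ht.1]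
  -- step 3 : pointwise bound on "derivative difference"
  have step3 : ∀ t ∈ Set.Icc (0:ℝ) 1, ∀ s : ℝ, |s| = 1 →
      |h (θ + (s * t) • v) v - h θ v - (s * t) * g θ v v| ≤ M * ‖v‖ ^ 3 := by
    intro t ht s hs1
    have hx := hmem t ht s hs1
    have h2 := step2 _ hx
    have happ : |(h (θ + (s * t) • v) - h θ - g θ (θ + (s * t) • v - θ)) v|
        ≤ ‖h (θ + (s * t) • v) - h θ - g θ (θ + (s * t) • v - θ)‖ * ‖v‖ :=
      (h (θ + (s * t) • v) - h θ - g θ (θ + (s * t) • v - θ)).le_opNorm v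
    have hxθ : ‖θ + (s * t) • v - θ‖ ≤ ‖v‖ := mem_closedBall_iff_norm.mp hx
    have hval : (h (θ + (s * t) • v) - h θ - g θ (θ + (s * t) • v - θ)) v
        = h (θ + (s * t) • v) v - h θ v - (s * t) * g θ v v := by
      rw [add_sub_cancel_left]
      simp [ContinuousLinearMap.sub_apply, _root_.map_smul]
    rw [hval] at happ
    refine happ.trans ?_
    have : ‖h (θ + (s * t) • v) - h θ - g θ (θ + (s * t) • v - θ)‖ ≤ M * ‖v‖ * ‖v‖ := by
      refine (h2.trans ?_)
      exact mul_le_mul_of_nonneg_left hxθ (by positivity)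
    calc ‖h (θ + (s * t) • v) - h θ - g θ (θ + (s * t) • v - θ)‖ * ‖v‖
        ≤ (M * ‖v‖ * ‖v‖) * ‖v‖ := mul_le_mul_of_nonneg_right this (norm_nonneg v)
      _ = M * ‖v‖ ^ 3 := by ring
  -- the one-variable function
  set F : ℝ → ℝ := fun t => f (θ + t • v) - f (θ - t • v) with hF_def
  have hd : ∀ t : ℝ, HasDerivAt F (h (θ + t • v) v + h (θ - t • v) v) t := by
    intro t
    have d1 : HasDerivAt (fun t : ℝ => θ + t • v) v t := by
      simpa using ((hasDerivAt_id t).smul_const v).const_add θ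
    have d2 : HasDerivAt (fun t : ℝ => θ - t • v) (-v) t := by
      simpa using ((hasDerivAt_id t).smul_const v).const_sub θ
    have dF1 : HasDerivAt (fun t : ℝ => f (θ + t • v)) (h (θ + t • v) v) t :=
      ((hf.differentiable (by norm_num)) _).hasFDerivAt.comp_hasDerivAt t d1
    have dF2 : HasDerivAt (fun t : ℝ => f (θ - t • v)) (h (θ - t • v) (-v)) t :=
      ((hf.differentiable (by norm_num)) _).hasFDerivAt.comp_hasDerivAt t d2
    have := dF1.sub dF2
    rw [map_neg, sub_neg_eq_add] at this
    exact this
  set φ : ℝ →L[ℝ] ℝ := (1 : ℝ →L[ℝ] ℝ).smulRight (2 * h θ v) with hφ_def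
  have key : ‖F 1 - F 0 - φ (1 - 0)‖ ≤ (2 * M * ‖v‖ ^ 3) * ‖(1:ℝ) - 0‖ := by
    refine (convex_Icc (0:ℝ) 1).norm_image_sub_le_of_norm_hasFDerivWithin_le'
      (f' := fun t => (1 : ℝ →L[ℝ] ℝ).smulRight (h (θ + t • v) v + h (θ - t • v) v))
      (fun t _ => ((hasDerivAt_iff_hasFDerivAt).mp (hd t)).hasFDerivWithinAt)
      ?_ (Set.left_mem_Icc.mpr zero_le_one) (Set.right_mem_Icc.mpr zero_le_one)
    intro t ht
    have hdiff : (1 : ℝ →L[ℝ] ℝ).smulRight (h (θ + t • v) v + h (θ - t • v) v) - φ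
        = (1 : ℝ →L[ℝ] ℝ).smulRight (h (θ + t • v) v + h (θ - t • v) v - 2 * h θ v) := by
      ext
      simp [φ]
    rw [hdiff]
    have hnorm : ‖(1 : ℝ →L[ℝ] ℝ).smulRight (h (θ + t • v) v + h (θ - t • v) v - 2 * h θ v)‖
        = |h (θ + t • v) v + h (θ - t • v) v - 2 * h θ v| := by
      rw [ContinuousLinearMap.norm_smulRight_apply, norm_one, one_mul, Real.norm_eq_abs]
    rw [hnorm]
    have b1 := step3 t ht 1 (by norm_num)
    have b2 := step3 t ht (-1) (by norm_num)
    rw [show ((1:ℝ) * t) = t by ring] at b1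
    have e2 : θ + (-1 * t) • v = θ - t • v := by
      rw [show ((-1:ℝ) * t) = -t by ring, neg_smul, ← sub_eq_add_neg]
    rw [e2] at b2
    have := abs_add_le (h (θ + t • v) v - h θ v - t * g θ v v)
      (h (θ - t • v) v - h θ v - (-1 * t) * g θ v v)
    calc |h (θ + t • v) v + h (θ - t • v) v - 2 * h θ v|
        = |(h (θ + t • v) v - h θ v - t * g θ v v)
            + (h (θ - t • v) v - h θ v - (-1 * t) * g θ v v)| := by ring_nf
      _ ≤ |h (θ + t • v) v - h θ v - t * g θ v v|
            + |h (θ - t • v) v - h θ v - (-1 * t) * g θ v v| := this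
      _ ≤ M * ‖v‖ ^ 3 + M * ‖v‖ ^ 3 := add_le_add b1 b2
      _ = 2 * M * ‖v‖ ^ 3 := by ring
  have hF0 : F 0 = 0 := by simp [F]
  have hF1 : F 1 = f (θ + v) - f (θ - v) := by simp [F]
  have hφ1 : φ (1 - 0) = 2 * h θ v := by simp [φ]
  rw [hF0, hF1, hφ1, sub_zero] at key
  simpa using key


/-- If `μ : ℝ^p → ℝ` is three times continuously differentiable and
`Θ ⊂ ℝ^p` is compact, then there is a constant `K > 0` such that for every `θ ∈ Θ`,
every `c ∈ (0,1]` and `u` uniformly distributed on the unit sphere (i.e. with law the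
rotation-invariant probability measure `ν` concentrated on the unit sphere), the
simultaneous-perturbation gradient estimator satisfies
`‖E[((μ(θ+cu) − μ(θ−cu))/(2c))·u] − (1/p)∇μ(θ)‖ ≤ K c²`. -/
theorem spsa_gradient_estimator_bias (p : ℕ) (hp : 1 ≤ p)
    (μ : EuclideanSpace ℝ (Fin p) → ℝ) (hμ : ContDiff ℝ 3 μ)
    (Θ : Set (EuclideanSpace ℝ (Fin p))) (hΘ : IsCompact Θ)
    (ν : Measure (EuclideanSpace ℝ (Fin p))) [IsProbabilityMeasure ν]
    (hsupp : ν {x | ‖x‖ = 1}ᶜ = 0)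
    (hinv : ∀ R : EuclideanSpace ℝ (Fin p) ≃ₗᵢ[ℝ] EuclideanSpace ℝ (Fin p),
      Measure.map R ν = ν) :
    ∃ K : ℝ, 0 < K ∧ ∀ θ ∈ Θ, ∀ c ∈ Set.Ioc (0 : ℝ) 1,
      ‖(∫ u, ((μ (θ + c • u) - μ (θ - c • u)) / (2 * c)) • u ∂ν) -
          (1 / (p : ℝ)) • gradient μ θ‖ ≤ K * c ^ 2 := by
  classical
  have h2 : ContDiff ℝ 2 (fderiv ℝ μ) := hμ.fderiv_right (by norm_num)
  have h1 : ContDiff ℝ 1 (fderiv ℝ (fderiv ℝ μ)) := h2.fderiv_right (by norm_num)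
  have hcont3 : Continuous fun x => fderiv ℝ (fderiv ℝ (fderiv ℝ μ)) x :=
    h1.continuous_fderiv one_ne_zero
  obtain ⟨C, hC⟩ := (hΘ.cthickening (r := 1)).exists_bound_of_continuousOn
    (f := fun x => fderiv ℝ (fderiv ℝ (fderiv ℝ μ)) x) hcont3.continuousOn
  set M := max C 0 with hM_def
  have hM0 : 0 ≤ M := le_max_right _ _
  refine ⟨M + 1, by positivity, ?_⟩
  intro θ hθ c hc
  obtain ⟨hc0, hc1⟩ := hc
  -- gradient / fderiv
  have grad_eq : ∀ u : EuclideanSpace ℝ (Fin p),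
      (inner ℝ (gradient μ θ) u : ℝ) = fderiv ℝ μ θ u := by
    intro u
    rw [gradient]
    exact InnerProductSpace.toDual_symm_apply
  -- integrability
  have hcont1 : Continuous fun u : EuclideanSpace ℝ (Fin p) =>
      ((μ (θ + c • u) - μ (θ - c • u)) / (2 * c)) • u := by
    have hμc := hμ.continuous
    fun_prop
  have hint1 : Integrable (fun u : EuclideanSpace ℝ (Fin p) =>
      ((μ (θ + c • u) - μ (θ - c • u)) / (2 * c)) • u) ν :=
    integrable_of_sphere ν hsupp hcont1
  have hint2 : Integrable (fun u : EuclideanSpace ℝ (Fin p) =>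
      (inner ℝ (gradient μ θ) u : ℝ) • u) ν :=
    integrable_of_sphere ν hsupp (by fun_prop)
  have hmom := moment_vec ν hsupp hinv hp (gradient μ θ)
  rw [← hmom, ← integral_sub hint1 hint2]
  have hbound : ∀ᵐ u ∂ν, ‖((μ (θ + c • u) - μ (θ - c • u)) / (2 * c)) • u
      - (inner ℝ (gradient μ θ) u : ℝ) • u‖ ≤ (M + 1) * c ^ 2 := by
    filter_upwards [sphere_ae ν hsupp] with u hu
    have hcu : ‖c • u‖ = c := by
      rw [norm_smul, hu, Real.norm_eq_abs, abs_of_pos hc0, mul_one]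
    have hMball : ∀ x ∈ Metric.closedBall θ ‖c • u‖,
        ‖fderiv ℝ (fderiv ℝ (fderiv ℝ μ)) x‖ ≤ M := by
      intro x hx
      refine le_trans (hC x ?_) (le_max_left _ _)
      refine Metric.closedBall_subset_cthickening hθ 1 ?_
      exact Metric.closedBall_subset_closedBall (by rw [hcu]; exact hc1) hx
    have htay := taylor_sym μ hμ θ (c • u) M hMball
    rw [hcu] at htay
    have hfd : fderiv ℝ μ θ (c • u) = c * fderiv ℝ μ θ u := by
      rw [_root_.map_smul, smul_eq_mul]
    rw [hfd] at htay
    set A := μ (θ + c • u) - μ (θ - c • u) with hA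
    set D : ℝ := fderiv ℝ μ θ u with hD
    have hsmul : ((A / (2 * c)) • u - (inner ℝ (gradient μ θ) u : ℝ) • u)
        = (A / (2 * c) - D) • u := by
      rw [grad_eq u, ← sub_smul]
    rw [hsmul, norm_smul, hu, mul_one, Real.norm_eq_abs]
    have hrw : A / (2 * c) - D = (A - 2 * (c * D)) / (2 * c) := by
      field_simp
    rw [hrw, abs_div, abs_of_pos (by positivity : (0:ℝ) < 2 * c)]
    rw [div_le_iff₀ (by positivity : (0:ℝ) < 2 * c)]
    have hc3 : 2 * M * c ^ 3 ≤ (M + 1) * c ^ 2 * (2 * c) := by nlinarith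
    exact htay.trans hc3
  have := norm_integral_le_of_norm_le_const hbound
  simpa [measure_univ] using this
end
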